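/- For every even integer n ≥ 18 with n ≡ 6 (mod 8), writing n = 6 + 8(t+1) with t ≥ 1, the edge u u' is a solitary edge of G''_n = G'_t⟨S_3⟩; that is, the edge joining u and u' lies in exactly one perfect matching of G''_n. Equivalently, G''_n − {u, u'} has exactly one perfect matching. -/

import Mathlib

open SimpleGraph

/-- The number of perfect matchings of a graph. -/
noncomputable def numPM {V : Type*} (G : SimpleGraph V) : ℕ :=
  Set.ncard {M : G.Subgraph | M.IsPerfectMatching}

/-- A graph is 3-connected if it has at least 4 vertices and deleting any set of at most
two vertices leaves a connected graph. -/
def ThreeConnected {V : Type*} [Fintype V] (G : SimpleGraph V) : Prop :=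
  4 ≤ Fintype.card V ∧
    ∀ s : Set V, s.ncard ≤ 2 → (G.induce (sᶜ : Set V)).Connected

/-- A brick: a 3-connected graph such that deleting any two distinct vertices leaves
a graph with a perfect matching (Edmonds–Lovász–Pulleyblank characterization). -/
def IsBrick {V : Type*} [Fintype V] (G : SimpleGraph V) : Prop :=
  ThreeConnected G ∧
    ∀ x y : V, x ≠ y →
      ∃ M : (G.induce {v : V | v ≠ x ∧ v ≠ y}).Subgraph, M.IsPerfectMatching

/-- A brick is extremal when its number of perfect matchings equals |E| - |V| + 1. -/
def IsExtremal {V : Type*} [Fintype V] (G : SimpleGraph V) : Prop :=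
  numPM G + Fintype.card V = G.edgeSet.ncard + 1

/-- The set `S = {u₀¹, u₀³, u} ∪ {uₛ², uₛ⁴ : 0 ≤ s ≤ t}` of vertices of `G_t`
(here `Sum.inl (s, j)` is the vertex `u_s^{j+1}` and `Sum.inr false` is `u`;
`Sum.inr true` will be the extra vertex `u'` of `G'_t`). -/
def Sset (t : ℕ) : Set ((Fin (t + 1) × Fin 4) ⊕ Bool) :=
  {p | p = Sum.inl (0, 0) ∨ p = Sum.inl (0, 2) ∨ p = Sum.inr false ∨
       ∃ s : Fin (t + 1), p = Sum.inl (s, 1) ∨ p = Sum.inl (s, 3)}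

/-- The graph `G'_t`: the vertex `Sum.inl (s, j)` is `u_s^{j+1}`, `Sum.inr false` is `u`
and `Sum.inr true` is `u'`.  The edges are the path edges `u_s^1 u_s^2 u_s^3 u_s^4`
for `0 ≤ s ≤ t`, the edges `u_s^1 u_{s+1}^1` and `u_s^4 u_{s+1}^3` for `0 ≤ s ≤ t−1`,
the edges `u u_t^1` and `u u_t^4`, and the edges from `u'` to every vertex of `S`. -/
def G't (t : ℕ) : SimpleGraph ((Fin (t + 1) × Fin 4) ⊕ Bool) :=
  SimpleGraph.fromRel (fun p q =>
    (∃ (s : Fin (t + 1)) (j j' : Fin 4), (j' : ℕ) = (j : ℕ) + 1 ∧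
        p = Sum.inl (s, j) ∧ q = Sum.inl (s, j')) ∨
    (∃ s s' : Fin (t + 1), (s' : ℕ) = (s : ℕ) + 1 ∧
        ((p = Sum.inl (s, 0) ∧ q = Sum.inl (s', 0)) ∨
         (p = Sum.inl (s, 3) ∧ q = Sum.inl (s', 2)))) ∨
    (p = Sum.inl (Fin.last t, 0) ∧ q = Sum.inr false) ∨
    (p = Sum.inl (Fin.last t, 3) ∧ q = Sum.inr false) ∨
    (p ∈ Sset t ∧ q = Sum.inr true))

/-- The sets `S₁ = S \ {u_t², u_t⁴, u}`, `S₂ = S \ {u_t⁴, u}`, `S₃ = S \ {u}`, `S₄ = S`. -/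
def Ssub (t : ℕ) : ℕ → Set ((Fin (t + 1) × Fin 4) ⊕ Bool)
  | 1 => Sset t \ {Sum.inl (Fin.last t, 1), Sum.inl (Fin.last t, 3), Sum.inr false}
  | 2 => Sset t \ {Sum.inl (Fin.last t, 3), Sum.inr false}
  | 3 => Sset t \ {Sum.inr false}
  | _ => Sset t

/-- Vertices of the graph obtained from `G` by simultaneous triangle-insertions at all
vertices of `S'`: a vertex is either `(v, none)` for an untouched vertex `v ∉ S'`, or
`(v, some w)` for `v ∈ S'` and `w` a neighbor of `v`, the triangle vertex of `v`
facing `w`.  (When every vertex of `S'` has degree 3, each `v ∈ S'` is replaced by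
a triangle whose vertex facing `w` is joined to `w`.) -/
abbrev ExpandVerts {V : Type*} (G : SimpleGraph V) (S' : Set V) : Type _ :=
  {p : V × Option V //
    (p.1 ∉ S' ∧ p.2 = none) ∨ (p.1 ∈ S' ∧ ∃ w, p.2 = some w ∧ G.Adj p.1 w)}

noncomputable instance expandVertsFintype {V : Type*} [Fintype V] (G : SimpleGraph V)
    (S' : Set V) : Fintype (ExpandVerts G S') := by
  classical exact Subtype.fintype _

/-- The graph obtained from `G` by triangle-insertions at all vertices of `S'`:
two untouched vertices are adjacent iff they were adjacent in `G`; the triangle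
vertex of `v` facing `w` is adjacent to the other two triangle vertices of `v`,
and to `w` (to the triangle vertex of `w` facing `v`, if `w ∈ S'`). -/
def expand {V : Type*} (G : SimpleGraph V) (S' : Set V) :
    SimpleGraph (ExpandVerts G S') :=
  SimpleGraph.fromRel (fun p q =>
    (p.1.2 = none ∧ q.1.2 = none ∧ G.Adj p.1.1 q.1.1) ∨
    (p.1.2 = none ∧ q.1.2 = some p.1.1) ∨
    (∃ w w' : V, p.1.2 = some w ∧ q.1.2 = some w' ∧
      ((p.1.1 = q.1.1 ∧ w ≠ w') ∨ (q.1.1 = w ∧ p.1.1 = w'))))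

/-- The vertex `u` of `G''_n = G'_t⟨S₃⟩` (it is not inserted, since `u ∉ S₃`). -/
def uVert (t : ℕ) : ExpandVerts (G't t) (Ssub t 3) :=
  ⟨(Sum.inr false, none), Or.inl ⟨by simp [Ssub], rfl⟩⟩

/-- The vertex `u'` of `G''_n = G'_t⟨S₃⟩` (it is not inserted, since `u' ∉ S`). -/
def u'Vert3 (t : ℕ) : ExpandVerts (G't t) (Ssub t 3) :=
  ⟨(Sum.inr true, none), Or.inl ⟨by simp [Ssub, Sset], rfl⟩⟩


section Generic
open SimpleGraph Set
variable {V : Type*} {G : SimpleGraph V}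



variable {V : Type*} {G : SimpleGraph V}

/-- Matchings of `G` saturating exactly `A`. -/
def MA (G : SimpleGraph V) (A : Set V) : Set G.Subgraph :=
  {M | M.verts = A ∧ M.IsMatching}

lemma MA_empty : MA G (∅ : Set V) = {⊥} := by
  ext M
  simp only [MA, Set.mem_setOf_eq, Set.mem_singleton_iff]
  constructor
  · rintro ⟨hv, -⟩
    ext x y
    · rw [hv, SimpleGraph.Subgraph.verts_bot]
    · constructor
      · intro h
        have := h.fst_mem
        rw [hv] at this
        exact absurd this (Set.notMem_empty _)
      · intro h
        exact absurd h SimpleGraph.Subgraph.not_bot_adj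
  · rintro rfl
    refine ⟨SimpleGraph.Subgraph.verts_bot, ?_⟩
    intro v hv
    rw [SimpleGraph.Subgraph.verts_bot] at hv
    simp at hv

lemma MA_empty_ncard : (MA G (∅ : Set V)).ncard = 1 := by
  rw [MA_empty]; simp

section core
variable {x w : V} {B : Set V}

/-- key recovery: a matching with verts `B ∪ {x,w}` containing the edge `x‒w`
equals (its deletion) ⊔ the edge. -/
lemma matching_eq_sup (hxw : G.Adj x w) (hxB : x ∉ B) (hwB : w ∉ B)
    {M : G.Subgraph} (hv : M.verts = B ∪ {x, w}) (hm : M.IsMatching) (ha : M.Adj x w) :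
    M = (M.deleteVerts {x, w}) ⊔ G.subgraphOfAdj hxw := by
  have hxv : x ∈ M.verts := ha.fst_mem
  have hwv : w ∈ M.verts := ha.snd_mem
  ext a b
  · simp only [SimpleGraph.Subgraph.verts_sup, SimpleGraph.Subgraph.deleteVerts_verts,
      subgraphOfAdj_verts, hv, Set.mem_union, Set.mem_diff, Set.mem_insert_iff,
      Set.mem_singleton_iff]
    tauto
  · simp only [SimpleGraph.Subgraph.sup_adj, SimpleGraph.Subgraph.deleteVerts_adj, subgraphOfAdj_adj]
    constructor
    · intro h
      by_cases hax : a = x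
      · subst hax
        have := (hm hxv).unique h ha
        subst this
        right
        simp
      by_cases haw : a = w
      · subst haw
        have := (hm hwv).unique h ha.symm
        subst this
        right
        simp [Sym2.eq_swap]
      by_cases hbx : b = x
      · subst hbx
        have := (hm hxv).unique h.symm ha
        exact absurd this haw
      by_cases hbw : b = w
      · subst hbw
        have := (hm hwv).unique h.symm ha.symm
        exact absurd this hax
      · left
        refine ⟨h.fst_mem, ?_, h.snd_mem, ?_, h⟩ <;> simp [hax, haw, hbx, hbw]
    · rintro (⟨-, -, -, -, h⟩ | h)
      · exact h
      · rw [Sym2.eq_iff] at h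
        rcases h with ⟨rfl, rfl⟩ | ⟨rfl, rfl⟩
        · exact ha
        · exact ha.symm

lemma delete_matching (hxB : x ∉ B) (hwB : w ∉ B)
    {M : G.Subgraph} (hv : M.verts = B ∪ {x, w}) (hm : M.IsMatching) (ha : M.Adj x w) :
    (M.deleteVerts {x, w}) ∈ MA G B := by
  have hxv : x ∈ M.verts := ha.fst_mem
  have hwv : w ∈ M.verts := ha.snd_mem
  have hne : x ≠ w := ha.ne
  constructor
  · rw [SimpleGraph.Subgraph.deleteVerts_verts, hv]
    ext a
    simp only [Set.mem_diff, Set.mem_union, Set.mem_insert_iff, Set.mem_singleton_iff]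
    constructor
    · rintro ⟨h | h, h2⟩
      · exact h
      · exact absurd h h2
    · intro h
      refine ⟨Or.inl h, fun hc => ?_⟩
      rcases hc with rfl | rfl
      exacts [hxB h, hwB h]
  · intro v hvv
    rw [SimpleGraph.Subgraph.deleteVerts_verts] at hvv
    obtain ⟨hv1, hv2⟩ := hvv
    simp only [Set.mem_insert_iff, Set.mem_singleton_iff, not_or] at hv2
    obtain ⟨p, hp, hpu⟩ := hm hv1
    have hpx : p ≠ x := by
      rintro rfl
      exact hv2.2 ((hm hxv).unique hp.symm ha)
    have hpw : p ≠ w := by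
      rintro rfl
      exact hv2.1 ((hm hwv).unique hp.symm ha.symm)
    refine ⟨p, ?_, ?_⟩
    · simp only [SimpleGraph.Subgraph.deleteVerts_adj]
      refine ⟨hv1, ?_, hp.snd_mem, ?_, hp⟩ <;> simp [hv2.1, hv2.2, hpx, hpw]
    · intro q hq
      rw [SimpleGraph.Subgraph.deleteVerts_adj] at hq
      exact hpu q hq.2.2.2.2

lemma sup_mem (hxw : G.Adj x w) (hxB : x ∉ B) (hwB : w ∉ B)
    {N : G.Subgraph} (hN : N ∈ MA G B) :
    (N ⊔ G.subgraphOfAdj hxw).verts = B ∪ {x, w} ∧ (N ⊔ G.subgraphOfAdj hxw).IsMatching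
      ∧ (N ⊔ G.subgraphOfAdj hxw).Adj x w := by
  obtain ⟨hNv, hNm⟩ := hN
  refine ⟨by simp [hNv], ?_, by simp⟩
  apply hNm.sup (SimpleGraph.Subgraph.IsMatching.subgraphOfAdj hxw)
  rw [hNm.support_eq_verts, hNv, support_subgraphOfAdj]
  rw [Set.disjoint_iff]
  rintro a ⟨ha, ha2⟩
  simp only [Set.mem_insert_iff, Set.mem_singleton_iff] at ha2
  rcases ha2 with rfl | rfl
  · exact hxB ha
  · exact hwB ha

lemma delete_sup (hxw : G.Adj x w) (hxB : x ∉ B) (hwB : w ∉ B)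
    {N : G.Subgraph} (hN : N ∈ MA G B) :
    (N ⊔ G.subgraphOfAdj hxw).deleteVerts {x, w} = N := by
  obtain ⟨hNv, hNm⟩ := hN
  have hxN : x ∉ N.verts := hNv ▸ hxB
  have hwN : w ∉ N.verts := hNv ▸ hwB
  ext a b
  · simp only [SimpleGraph.Subgraph.deleteVerts_verts, SimpleGraph.Subgraph.verts_sup,
      subgraphOfAdj_verts, Set.mem_diff, Set.mem_union, Set.mem_insert_iff,
      Set.mem_singleton_iff]
    constructor
    · rintro ⟨h | h, h2⟩
      · exact h
      · exact absurd h h2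
    · intro h
      refine ⟨Or.inl h, fun hc => ?_⟩
      rcases hc with rfl | rfl
      · exact hxN h
      · exact hwN h
  · simp only [SimpleGraph.Subgraph.deleteVerts_adj, SimpleGraph.Subgraph.sup_adj, subgraphOfAdj_adj]
    constructor
    · rintro ⟨-, h1, -, h2, h | h⟩
      · exact h
      · exfalso
        simp only [Set.mem_insert_iff, Set.mem_singleton_iff, not_or] at h1 h2
        rw [Sym2.eq_iff] at h
        rcases h with ⟨rfl, rfl⟩ | ⟨rfl, rfl⟩
        · exact h1.1 rfl
        · exact h1.2 rfl
    · intro h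
      have h1 := h.fst_mem
      have h2 := h.snd_mem
      refine ⟨Or.inl h1, ?_, Or.inl h2, ?_, Or.inl h⟩ <;>
        simp only [Set.mem_insert_iff, Set.mem_singleton_iff, not_or] <;>
        constructor <;> rintro rfl <;> first
          | exact hxN ‹_› | exact hwN ‹_›

/-- Core bijection: matchings on `B ∪ {x,w}` containing edge `x‒w` biject with
matchings on `B`, via deleting/adding the pair `{x,w}`. -/
lemma core_ncard (hxw : G.Adj x w) (hxB : x ∉ B) (hwB : w ∉ B) :
    {M : G.Subgraph | M.verts = B ∪ {x, w} ∧ M.IsMatching ∧ M.Adj x w}.ncard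
      = (MA G B).ncard := by
  have himg : (fun M : G.Subgraph => M.deleteVerts {x, w}) ''
      {M : G.Subgraph | M.verts = B ∪ {x, w} ∧ M.IsMatching ∧ M.Adj x w} = MA G B := by
    ext N
    constructor
    · rintro ⟨M, ⟨hv, hm, ha⟩, rfl⟩
      exact delete_matching hxB hwB hv hm ha
    · intro hN
      refine ⟨N ⊔ G.subgraphOfAdj hxw, ?_, delete_sup hxw hxB hwB hN⟩
      exact sup_mem hxw hxB hwB hN
  have hinj : Set.InjOn (fun M : G.Subgraph => M.deleteVerts {x, w})
      {M : G.Subgraph | M.verts = B ∪ {x, w} ∧ M.IsMatching ∧ M.Adj x w} := by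
    rintro M1 ⟨hv1, hm1, ha1⟩ M2 ⟨hv2, hm2, ha2⟩ h
    rw [matching_eq_sup hxw hxB hwB hv1 hm1 ha1, matching_eq_sup hxw hxB hwB hv2 hm2 ha2]
    simp only at h
    rw [h]
  rw [← himg, Set.ncard_image_of_injOn hinj]

end core

section peel
variable {A : Set V} {x y z w : V}

lemma force_deg1 (hx : x ∈ A)
    (huniq : ∀ p, G.Adj x p → p ∈ A → p = w) :
    ∀ M ∈ MA G A, M.Adj x w := by
  rintro M ⟨hv, hm⟩
  obtain ⟨p, hp, -⟩ := hm (hv ▸ hx)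
  have := huniq p (M.adj_sub hp) (hv ▸ hp.snd_mem)
  subst this; exact hp

lemma force_twin (hx : x ∈ A) (hy : y ∈ A) (hxy : G.Adj x y)
    (hnx : ∀ p, G.Adj x p → p ∈ A → p = y ∨ p = z)
    (hny : ∀ p, G.Adj y p → p ∈ A → p = x ∨ p = z) :
    ∀ M ∈ MA G A, M.Adj x y := by
  rintro M ⟨hv, hm⟩
  obtain ⟨p, hp, hpu⟩ := hm (hv ▸ hx)
  rcases hnx p (M.adj_sub hp) (hv ▸ hp.snd_mem) with rfl | rfl
  · exact hp
  · obtain ⟨q, hq, hqu⟩ := hm (hv ▸ hy)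
    rcases hny q (M.adj_sub hq) (hv ▸ hq.snd_mem) with rfl | rfl
    · exact hq.symm
    · exfalso
      obtain ⟨r, hr, hru⟩ := hm hp.snd_mem
      have h1 := hru x hp.symm
      have h2 := hru y hq.symm
      rw [← h2] at h1
      exact hxy.ne h1

lemma peel_forced (hxw : G.Adj x w) (hx : x ∈ A) (hw : w ∈ A)
    (hforce : ∀ M ∈ MA G A, M.Adj x w) :
    (MA G A).ncard = (MA G (A \ {x, w})).ncard := by
  have hxB : x ∉ A \ ({x, w} : Set V) := fun h => h.2 (Or.inl rfl)
  have hwB : w ∉ A \ ({x, w} : Set V) := fun h => h.2 (Or.inr rfl)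
  rw [← core_ncard hxw hxB hwB]
  congr 1
  have hU : A \ ({x, w} : Set V) ∪ {x, w} = A := by
    apply Set.diff_union_of_subset
    rintro a (rfl | rfl)
    · exact hx
    · exact hw
  ext M
  constructor
  · rintro ⟨hv, hm⟩
    exact ⟨by rw [hv, hU], hm, hforce M ⟨hv, hm⟩⟩
  · rintro ⟨hv, hm, -⟩
    exact ⟨by rw [hv, hU], hm⟩

lemma peel_deg1 (hxw : G.Adj x w) (hx : x ∈ A) (hw : w ∈ A)
    (huniq : ∀ p, G.Adj x p → p ∈ A → p = w) :
    (MA G A).ncard = (MA G (A \ {x, w})).ncard :=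
  peel_forced hxw hx hw (force_deg1 hx huniq)

lemma peel_twin (hx : x ∈ A) (hy : y ∈ A) (hxy : G.Adj x y)
    (hnx : ∀ p, G.Adj x p → p ∈ A → p = y ∨ p = z)
    (hny : ∀ p, G.Adj y p → p ∈ A → p = x ∨ p = z) :
    (MA G A).ncard = (MA G (A \ {x, y})).ncard :=
  peel_forced hxy hx hy (force_twin hx hy hxy hnx hny)

end peel

section conversions

/-- push a subgraph of an induced graph into the ambient graph -/
def pushSub (A : Set V) (M' : (G.induce A).Subgraph) : G.Subgraph where
  verts := Subtype.val '' M'.verts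
  Adj a b := ∃ (ha : a ∈ A) (hb : b ∈ A), M'.Adj ⟨a, ha⟩ ⟨b, hb⟩
  adj_sub := by
    rintro a b ⟨ha, hb, h⟩
    exact M'.adj_sub h
  edge_vert := by
    rintro a b ⟨ha, hb, h⟩
    exact ⟨⟨a, ha⟩, M'.edge_vert h, rfl⟩
  symm := ⟨by
    rintro a b ⟨ha, hb, h⟩
    exact ⟨hb, ha, h.symm⟩⟩

lemma numPM_induce (A : Set V) : numPM (G.induce A) = (MA G A).ncard := by
  have himg : pushSub A '' {M' : (G.induce A).Subgraph | M'.IsPerfectMatching} = MA G A := by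
    ext N
    constructor
    · rintro ⟨M', ⟨hm, hs⟩, rfl⟩
      constructor
      · show Subtype.val '' M'.verts = A
        rw [hs.verts_eq_univ]
        exact Subtype.coe_image_univ A
      · rintro v ⟨⟨a, ha⟩, hav, rfl⟩
        obtain ⟨⟨p, hp⟩, hadj, huniq⟩ := hm hav
        refine ⟨p, ⟨ha, hp, hadj⟩, ?_⟩
        rintro q ⟨ha', hq', hadj'⟩
        have := huniq ⟨q, hq'⟩ hadj'
        exact congrArg Subtype.val this
    · rintro ⟨hv, hm⟩
      refine ⟨{ verts := Set.univ, Adj := fun a b => N.Adj ↑a ↑b,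
                adj_sub := fun h => by
                  simp only [SimpleGraph.comap_adj, Function.Embedding.coe_subtype]
                  exact N.adj_sub h,
                edge_vert := fun _ => Set.mem_univ _,
                symm := ⟨fun a b h => h.symm⟩ }, ⟨?_, fun _ => Set.mem_univ _⟩, ?_⟩
      · rintro ⟨v, hvA⟩ -
        have hvN : v ∈ N.verts := hv ▸ hvA
        obtain ⟨p, hp, hpu⟩ := hm hvN
        have hpA : p ∈ A := hv ▸ hp.snd_mem
        refine ⟨⟨p, hpA⟩, hp, ?_⟩
        rintro ⟨q, hq⟩ hadj
        have := hpu q hadj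
        subst this; rfl
      · ext a b
        · constructor
          · rintro ⟨⟨a', ha'⟩, -, rfl⟩
            exact hv ▸ ha'
          · intro h
            exact ⟨⟨a, hv ▸ h⟩, Set.mem_univ _, rfl⟩
        · constructor
          · rintro ⟨ha, hb, h⟩
            exact h
          · intro h
            exact ⟨hv ▸ h.fst_mem, hv ▸ h.snd_mem, h⟩
  have hinj : Set.InjOn (pushSub A) {M' : (G.induce A).Subgraph | M'.IsPerfectMatching} := by
    rintro M1 ⟨hm1, hs1⟩ M2 ⟨hm2, hs2⟩ h
    ext ⟨a, ha⟩ ⟨b, hb⟩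
    · simp [hs1.verts_eq_univ, hs2.verts_eq_univ]
    · have : (pushSub A M1).Adj a b ↔ (pushSub A M2).Adj a b := by rw [h]
      simp only [pushSub] at this
      constructor
      · intro hadj
        obtain ⟨_, _, h2⟩ := this.mp ⟨ha, hb, hadj⟩
        exact h2
      · intro hadj
        obtain ⟨_, _, h2⟩ := this.mpr ⟨ha, hb, hadj⟩
        exact h2
  rw [numPM, ← himg, Set.ncard_image_of_injOn hinj]

lemma pm_with_edge {u u' : V} (huu' : G.Adj u u') :
    {M : G.Subgraph | M.IsPerfectMatching ∧ M.Adj u u'}.ncard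
      = (MA G (Set.univ \ {u, u'})).ncard := by
  have hx : u ∉ Set.univ \ ({u, u'} : Set V) := fun h => h.2 (Or.inl rfl)
  have hw : u' ∉ Set.univ \ ({u, u'} : Set V) := fun h => h.2 (Or.inr rfl)
  rw [← core_ncard huu' hx hw]
  congr 1
  have hU : Set.univ \ ({u, u'} : Set V) ∪ {u, u'} = Set.univ := by
    apply Set.diff_union_of_subset
    exact Set.subset_univ _
  ext M
  constructor
  · rintro ⟨⟨hm, hs⟩, ha⟩
    exact ⟨by rw [hs.verts_eq_univ, hU], hm, ha⟩
  · rintro ⟨hv, hm, ha⟩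
    refine ⟨⟨hm, ?_⟩, ha⟩
    intro v
    rw [hv, hU]
    exact Set.mem_univ v

end conversions

end Generic


namespace GAux
open SimpleGraph Set

variable {t : ℕ}

abbrev Bse (t : ℕ) := (Fin (t + 1) × Fin 4) ⊕ Bool

lemma mem_Sset_1 (s : Fin (t+1)) : (Sum.inl (s, 1) : Bse t) ∈ Sset t := by
  right; right; right; exact ⟨s, Or.inl rfl⟩

lemma mem_Sset_3 (s : Fin (t+1)) : (Sum.inl (s, 3) : Bse t) ∈ Sset t := by
  right; right; right; exact ⟨s, Or.inr rfl⟩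

lemma mem_Sset_u : (Sum.inr false : Bse t) ∈ Sset t := by
  right; right; left; rfl

lemma mem_Sset_00 : (Sum.inl (0, 0) : Bse t) ∈ Sset t := Or.inl rfl

lemma mem_Sset_02 : (Sum.inl (0, 2) : Bse t) ∈ Sset t := by
  right; left; rfl

lemma not_mem_Sset_u' : (Sum.inr true : Bse t) ∉ Sset t := by
  rintro (h | h | h | ⟨s, h | h⟩) <;> simp_all

lemma mem_Sset_0 (s : Fin (t+1)) : (Sum.inl (s, 0) : Bse t) ∈ Sset t ↔ s = 0 := by
  constructor
  · rintro (h | h | h | ⟨s', h | h'⟩) <;> simp_all [Prod.ext_iff]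
  · rintro rfl; exact mem_Sset_00

lemma mem_Sset_2 (s : Fin (t+1)) : (Sum.inl (s, 2) : Bse t) ∈ Sset t ↔ s = 0 := by
  constructor
  · rintro (h | h | h | ⟨s', h | h'⟩) <;> simp_all [Prod.ext_iff]
  · rintro rfl; exact mem_Sset_02

lemma mem_Ssub3 (p : Bse t) : p ∈ Ssub t 3 ↔ p ∈ Sset t ∧ p ≠ Sum.inr false := by
  show p ∈ Sset t \ {Sum.inr false} ↔ _
  simp [Set.mem_diff]

lemma G't_adj_1 (s : Fin (t+1)) (q : Bse t) :
    (G't t).Adj (Sum.inl (s,1)) q ↔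
      q = Sum.inl (s,0) ∨ q = Sum.inl (s,2) ∨ q = Sum.inr true := by
  rw [G't, SimpleGraph.fromRel_adj]
  constructor
  · rintro ⟨hne, h | h⟩ <;>
      rcases h with ⟨s0,j,j',hj,h1,h2⟩ | ⟨s0,s1,hs,⟨h1,h2⟩|⟨h1,h2⟩⟩ | ⟨h1,h2⟩ | ⟨h1,h2⟩ | ⟨h1,h2⟩ <;>
      simp_all [Prod.ext_iff, Fin.ext_iff, Sset, -Fin.val_eq_zero_iff] <;>
      first
        | omega
        | exact ⟨s1, by omega, by omega⟩
        | exact ⟨s0, by omega, by omega⟩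
        | exact Or.inl ⟨s1, by omega, by omega⟩
        | exact Or.inr ⟨s1, by omega, by omega⟩
        | exact Or.inl ⟨s0, by omega, by omega⟩
        | exact Or.inr ⟨s0, by omega, by omega⟩
  · rintro (rfl | rfl | rfl)
    · exact ⟨by simp, Or.inr (Or.inl ⟨s, 0, 1, by decide, rfl, rfl⟩)⟩
    · exact ⟨by simp, Or.inl (Or.inl ⟨s, 1, 2, by decide, rfl, rfl⟩)⟩
    · exact ⟨by simp, Or.inl (Or.inr (Or.inr (Or.inr (Or.inr ⟨mem_Sset_1 s, rfl⟩))))⟩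

lemma G't_adj_3 (s : Fin (t+1)) (q : Bse t) :
    (G't t).Adj (Sum.inl (s,3)) q ↔
      q = Sum.inl (s,2) ∨ (∃ s' : Fin (t+1), (s' : ℕ) = (s : ℕ) + 1 ∧ q = Sum.inl (s',2)) ∨
      (s = Fin.last t ∧ q = Sum.inr false) ∨ q = Sum.inr true := by
  rw [G't, SimpleGraph.fromRel_adj]
  constructor
  · rintro ⟨hne, h | h⟩ <;>
      rcases h with ⟨s0,j,j',hj,h1,h2⟩ | ⟨s0,s1,hs,⟨h1,h2⟩|⟨h1,h2⟩⟩ | ⟨h1,h2⟩ | ⟨h1,h2⟩ | ⟨h1,h2⟩ <;>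
      simp_all [Prod.ext_iff, Fin.ext_iff, Sset, -Fin.val_eq_zero_iff] <;>
      first
        | omega
        | exact ⟨s1, by omega, by omega⟩
        | exact ⟨s0, by omega, by omega⟩
        | exact Or.inl ⟨s1, by omega, by omega⟩
        | exact Or.inr ⟨s1, by omega, by omega⟩
        | exact Or.inl ⟨s0, by omega, by omega⟩
        | exact Or.inr ⟨s0, by omega, by omega⟩
  · rintro (rfl | ⟨s', hs', rfl⟩ | ⟨rfl, rfl⟩ | rfl)
    · exact ⟨by simp, Or.inr (Or.inl ⟨s, 2, 3, by decide, rfl, rfl⟩)⟩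
    · exact ⟨by simp, Or.inl (Or.inr (Or.inl ⟨s, s', hs', Or.inr ⟨rfl, rfl⟩⟩))⟩
    · exact ⟨by simp, Or.inl (Or.inr (Or.inr (Or.inr (Or.inl ⟨rfl, rfl⟩))))⟩
    · exact ⟨by simp, Or.inl (Or.inr (Or.inr (Or.inr (Or.inr ⟨mem_Sset_3 s, rfl⟩))))⟩

lemma G't_adj_0 (s : Fin (t+1)) (q : Bse t) :
    (G't t).Adj (Sum.inl (s,0)) q ↔
      q = Sum.inl (s,1) ∨ (∃ s' : Fin (t+1), (s' : ℕ) = (s : ℕ) + 1 ∧ q = Sum.inl (s',0)) ∨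
      (∃ s' : Fin (t+1), (s : ℕ) = (s' : ℕ) + 1 ∧ q = Sum.inl (s',0)) ∨
      (s = Fin.last t ∧ q = Sum.inr false) ∨ (s = 0 ∧ q = Sum.inr true) := by
  rw [G't, SimpleGraph.fromRel_adj]
  constructor
  · rintro ⟨hne, h | h⟩ <;>
      rcases h with ⟨s0,j,j',hj,h1,h2⟩ | ⟨s0,s1,hs,⟨h1,h2⟩|⟨h1,h2⟩⟩ | ⟨h1,h2⟩ | ⟨h1,h2⟩ | ⟨h1,h2⟩ <;>
      simp_all [Prod.ext_iff, Fin.ext_iff, Sset, -Fin.val_eq_zero_iff] <;>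
      first
        | omega
        | exact ⟨s1, by omega, by omega⟩
        | exact ⟨s0, by omega, by omega⟩
        | exact Or.inl ⟨s1, by omega, by omega⟩
        | exact Or.inr ⟨s1, by omega, by omega⟩
        | exact Or.inl ⟨s0, by omega, by omega⟩
        | exact Or.inr ⟨s0, by omega, by omega⟩
  · rintro (rfl | ⟨s', hs', rfl⟩ | ⟨s', hs', rfl⟩ | ⟨rfl, rfl⟩ | ⟨rfl, rfl⟩)
    · exact ⟨by simp, Or.inl (Or.inl ⟨s, 0, 1, by decide, rfl, rfl⟩)⟩
    · refine ⟨by simp [Prod.ext_iff, Fin.ext_iff]; omega,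
        Or.inl (Or.inr (Or.inl ⟨s, s', hs', Or.inl ⟨rfl, rfl⟩⟩))⟩
    · refine ⟨by simp [Prod.ext_iff, Fin.ext_iff]; omega,
        Or.inr (Or.inr (Or.inl ⟨s', s, hs', Or.inl ⟨rfl, rfl⟩⟩))⟩
    · exact ⟨by simp, Or.inl (Or.inr (Or.inr (Or.inl ⟨rfl, rfl⟩)))⟩
    · exact ⟨by simp, Or.inl (Or.inr (Or.inr (Or.inr (Or.inr ⟨Or.inl rfl, rfl⟩))))⟩

lemma G't_adj_2 (s : Fin (t+1)) (q : Bse t) :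
    (G't t).Adj (Sum.inl (s,2)) q ↔
      q = Sum.inl (s,1) ∨ q = Sum.inl (s,3) ∨
      (∃ s' : Fin (t+1), (s : ℕ) = (s' : ℕ) + 1 ∧ q = Sum.inl (s',3)) ∨
      (s = 0 ∧ q = Sum.inr true) := by
  rw [G't, SimpleGraph.fromRel_adj]
  constructor
  · rintro ⟨hne, h | h⟩ <;>
      rcases h with ⟨s0,j,j',hj,h1,h2⟩ | ⟨s0,s1,hs,⟨h1,h2⟩|⟨h1,h2⟩⟩ | ⟨h1,h2⟩ | ⟨h1,h2⟩ | ⟨h1,h2⟩ <;>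
      simp_all [Prod.ext_iff, Fin.ext_iff, Sset, -Fin.val_eq_zero_iff] <;>
      first
        | omega
        | exact ⟨s1, by omega, by omega⟩
        | exact ⟨s0, by omega, by omega⟩
        | exact Or.inl ⟨s1, by omega, by omega⟩
        | exact Or.inr ⟨s1, by omega, by omega⟩
        | exact Or.inl ⟨s0, by omega, by omega⟩
        | exact Or.inr ⟨s0, by omega, by omega⟩
  · rintro (rfl | rfl | ⟨s', hs', rfl⟩ | ⟨rfl, rfl⟩)
    · exact ⟨by simp, Or.inr (Or.inl ⟨s, 1, 2, by decide, rfl, rfl⟩)⟩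
    · exact ⟨by simp, Or.inl (Or.inl ⟨s, 2, 3, by decide, rfl, rfl⟩)⟩
    · refine ⟨by simp [Prod.ext_iff], Or.inr (Or.inr (Or.inl ⟨s', s, hs', Or.inr ⟨rfl, rfl⟩⟩))⟩
    · exact ⟨by simp, Or.inl (Or.inr (Or.inr (Or.inr (Or.inr ⟨Or.inr (Or.inl rfl), rfl⟩))))⟩

lemma G't_adj_uu' : (G't t).Adj (Sum.inr false) (Sum.inr true) := by
  rw [G't, SimpleGraph.fromRel_adj]
  exact ⟨by simp, Or.inl (Or.inr (Or.inr (Or.inr (Or.inr ⟨mem_Sset_u, rfl⟩))))⟩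

section ExpandLemmas
variable {V : Type*} {G : SimpleGraph V} {S' : Set V}

lemma expand_adj_some {p q : ExpandVerts G S'} {w₀ : V} (hp : p.1.2 = some w₀)
    (h : (expand G S').Adj p q) :
    (q.1.1 = p.1.1 ∧ ∃ w', q.1.2 = some w' ∧ w' ≠ w₀ ∧ G.Adj p.1.1 w') ∨
      (q.1.1 = w₀ ∧ (q.1.2 = none ∨ q.1.2 = some p.1.1)) := by
  rw [expand, SimpleGraph.fromRel_adj] at h
  obtain ⟨hne, h | h⟩ := h
  · rcases h with ⟨h1, -, -⟩ | ⟨h1, -⟩ | ⟨a, b, h1, h2, ⟨h3, h4⟩ | ⟨h3, h4⟩⟩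
    · rw [hp] at h1; exact absurd h1 (by simp)
    · rw [hp] at h1; exact absurd h1 (by simp)
    · rw [hp] at h1
      obtain rfl : a = w₀ := by injection h1.symm
      left
      refine ⟨h3.symm, b, h2, ?_, ?_⟩
      · rintro rfl
        apply hne
        exact Subtype.ext (Prod.ext h3 (by rw [hp, h2]))
      · rcases q.2 with ⟨-, hq2⟩ | ⟨-, w, hw, hadj⟩
        · rw [hq2] at h2; exact absurd h2 (by simp)
        · rw [hw] at h2
          obtain rfl : w = b := by injection h2
          rw [h3]; exact hadj
    · rw [hp] at h1
      obtain rfl : a = w₀ := by injection h1.symm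
      right
      exact ⟨h3, Or.inr (by rw [h2, h4])⟩
  · rcases h with ⟨-, h2, -⟩ | ⟨h1, h2⟩ | ⟨a, b, h1, h2, ⟨h3, h4⟩ | ⟨h3, h4⟩⟩
    · rw [hp] at h2; exact absurd h2 (by simp)
    · right
      rw [hp] at h2
      have hq : q.1.1 = w₀ := by injection h2 with h'; exact h'.symm
      exact ⟨hq, Or.inl h1⟩
    · rw [hp] at h2
      obtain rfl : b = w₀ := by injection h2.symm
      left
      refine ⟨h3, a, h1, ?_, ?_⟩
      · rintro rfl
        apply hne
        exact Subtype.ext (Prod.ext h3.symm (by rw [hp, h1]))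
      · rcases q.2 with ⟨-, hq2⟩ | ⟨-, w, hw, hadj⟩
        · rw [hq2] at h1; exact absurd h1 (by simp)
        · rw [hw] at h1
          obtain rfl : w = a := by injection h1
          rw [← h3]; exact hadj
    · rw [hp] at h2
      have hb : b = w₀ := by injection h2 with h'; exact h'.symm
      right
      refine ⟨by rw [h4, hb], Or.inr (by rw [h1, h3])⟩

lemma expand_adj_none {p q : ExpandVerts G S'} (hp : p.1.2 = none)
    (h : (expand G S').Adj p q) :
    (q.1.2 = none ∧ G.Adj p.1.1 q.1.1) ∨ q.1.2 = some p.1.1 := by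
  rw [expand, SimpleGraph.fromRel_adj] at h
  obtain ⟨hne, h | h⟩ := h
  · rcases h with ⟨-, h2, h3⟩ | ⟨-, h2⟩ | ⟨a, b, h1, -, -⟩
    · exact Or.inl ⟨h2, h3⟩
    · exact Or.inr h2
    · rw [hp] at h1; exact absurd h1 (by simp)
  · rcases h with ⟨h1, -, h3⟩ | ⟨h1, h2⟩ | ⟨a, b, h1, h2, hc⟩
    · exact Or.inl ⟨h1, h3.symm⟩
    · rw [hp] at h2; exact absurd h2 (by simp)
    · rw [hp] at h2; exact absurd h2 (by simp)

lemma expand_adj_mates {v w1 w2 : V} {h1 h2}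
    (hne : w1 ≠ w2) :
    (expand G S').Adj (⟨(v, some w1), h1⟩ : ExpandVerts G S') ⟨(v, some w2), h2⟩ := by
  rw [expand, SimpleGraph.fromRel_adj]
  refine ⟨?_, Or.inl (Or.inr (Or.inr ⟨w1, w2, rfl, rfl, Or.inl ⟨rfl, hne⟩⟩))⟩
  intro hc
  apply hne
  have := congrArg (fun z => z.1.2) hc
  simpa using this

lemma expand_adj_face_none {v w : V} {h1 h2} :
    (expand G S').Adj (⟨(v, some w), h1⟩ : ExpandVerts G S') ⟨(w, none), h2⟩ := by
  rw [expand, SimpleGraph.fromRel_adj]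
  refine ⟨?_, Or.inr (Or.inr (Or.inl ⟨rfl, rfl⟩))⟩
  intro hc
  have := congrArg (fun z => z.1.2) hc
  simp at this

lemma expand_adj_face_some {v w : V} {h1 h2} (hvw : v ≠ w) :
    (expand G S').Adj (⟨(v, some w), h1⟩ : ExpandVerts G S') ⟨(w, some v), h2⟩ := by
  rw [expand, SimpleGraph.fromRel_adj]
  refine ⟨?_, Or.inl (Or.inr (Or.inr ⟨w, v, rfl, rfl, Or.inr ⟨rfl, rfl⟩⟩))⟩
  intro hc
  have := congrArg (fun z => z.1.1) hc
  exact hvw (by simpa using this)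

lemma expand_adj_none_none {v w : V} {h1 h2} (h : G.Adj v w) :
    (expand G S').Adj (⟨(v, none), h1⟩ : ExpandVerts G S') ⟨(w, none), h2⟩ := by
  rw [expand, SimpleGraph.fromRel_adj]
  refine ⟨?_, Or.inl (Or.inl ⟨rfl, rfl, h⟩)⟩
  intro hc
  have := congrArg (fun z => z.1.1) hc
  exact h.ne (by simpa using this)

end ExpandLemmas
end GAux


namespace GAux
open SimpleGraph Set

variable {t : ℕ}

abbrev VT (t : ℕ) := ExpandVerts (G't t) (Ssub t 3)
abbrev EG (t : ℕ) := expand (G't t) (Ssub t 3)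

def Tv (v w : Bse t) (hv : v ∈ Ssub t 3) (h : (G't t).Adj v w) : VT t :=
  ⟨(v, some w), Or.inr ⟨hv, w, rfl, h⟩⟩

def Pv (v : Bse t) (hv : v ∉ Ssub t 3) : VT t := ⟨(v, none), Or.inl ⟨hv, rfl⟩⟩

lemma Ssub3_3 (s : Fin (t+1)) : (Sum.inl (s,3) : Bse t) ∈ Ssub t 3 :=
  (mem_Ssub3 _).mpr ⟨mem_Sset_3 s, by simp⟩

lemma Ssub3_1 (s : Fin (t+1)) : (Sum.inl (s,1) : Bse t) ∈ Ssub t 3 :=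
  (mem_Ssub3 _).mpr ⟨mem_Sset_1 s, by simp⟩

lemma Ssub3_00 : (Sum.inl (0,0) : Bse t) ∈ Ssub t 3 :=
  (mem_Ssub3 _).mpr ⟨mem_Sset_00, by simp⟩

lemma Ssub3_02 : (Sum.inl (0,2) : Bse t) ∈ Ssub t 3 :=
  (mem_Ssub3 _).mpr ⟨mem_Sset_02, by simp⟩

lemma not_Ssub3_0 {s : Fin (t+1)} (hs : s ≠ 0) : (Sum.inl (s,0) : Bse t) ∉ Ssub t 3 := by
  intro hc
  exact hs ((mem_Sset_0 s).mp ((mem_Ssub3 _).mp hc).1)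

lemma not_Ssub3_2 {s : Fin (t+1)} (hs : s ≠ 0) : (Sum.inl (s,2) : Bse t) ∉ Ssub t 3 := by
  intro hc
  exact hs ((mem_Sset_2 s).mp ((mem_Ssub3 _).mp hc).1)

lemma eq_Tv {p : VT t} {v w : Bse t} {hv hadj} (hb : p.1.1 = v) (ho : p.1.2 = some w) :
    p = Tv v w hv hadj := Subtype.ext (Prod.ext hb ho)

lemma eq_Pv {p : VT t} {v : Bse t} {hv} (hb : p.1.1 = v) (ho : p.1.2 = none) :
    p = Pv v hv := Subtype.ext (Prod.ext hb ho)

def AI (t : ℕ) (m : ℕ) : Set (VT t) :=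
  {z | z.1.1 ≠ Sum.inr false ∧ z.1.1 ≠ Sum.inr true ∧
    ∀ s : Fin (t+1), m ≤ (s : ℕ) → z.1.1 ≠ Sum.inl (s,3) ∧ z.1 ≠ (Sum.inl (s,2), none)}

def AII (t : ℕ) (m : ℕ) : Set (VT t) :=
  {z | z ∈ AI t 1 ∧
    ∀ s : Fin (t+1), m ≤ (s : ℕ) → z.1.1 ≠ Sum.inl (s,1) ∧ z.1 ≠ (Sum.inl (s,0), none)}

lemma stageI_core (sF : Fin (t+1)) (hs1 : 1 ≤ (sF : ℕ)) (f : Bse t)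
    (hfadj : (G't t).Adj (Sum.inl (sF,3)) f)
    (hfchar : ∀ q, (G't t).Adj (Sum.inl (sF,3)) q ↔
        q = Sum.inl (sF,2) ∨ q = f ∨ q = Sum.inr true)
    (hf2 : f ≠ Sum.inl (sF,2)) (hfu' : f ≠ Sum.inr true)
    (hfout : ∀ p : VT t, p.1.1 = f → p ∉ AI t ((sF : ℕ)+1)) :
    (MA (EG t) (AI t ((sF : ℕ)+1))).ncard = (MA (EG t) (AI t (sF : ℕ))).ncard := by
  have hsF0 : sF ≠ 0 := by
    intro hc; rw [hc] at hs1; simp at hs1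
  set x : VT t := Tv (Sum.inl (sF,3)) f (Ssub3_3 sF) hfadj with hxdef
  set y : VT t := Tv (Sum.inl (sF,3)) (Sum.inr true) (Ssub3_3 sF)
    ((hfchar _).mpr (Or.inr (Or.inr rfl))) with hydef
  set z : VT t := Tv (Sum.inl (sF,3)) (Sum.inl (sF,2)) (Ssub3_3 sF)
    ((hfchar _).mpr (Or.inl rfl)) with hzdef
  set w : VT t := Pv (Sum.inl (sF,2)) (not_Ssub3_2 hsF0) with hwdef
  have hmemtri : ∀ (g : Bse t) hadj', Tv (Sum.inl (sF,3)) g (Ssub3_3 sF) hadj' ∈ AI t ((sF:ℕ)+1) := by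
    intro g hadj'
    refine ⟨by simp [Tv], by simp [Tv], ?_⟩
    intro s' hs'
    constructor
    · show (Sum.inl (sF,3) : Bse t) ≠ _
      simp only [ne_eq, Sum.inl.injEq, Prod.mk.injEq]
      rintro ⟨hc, -⟩
      rw [Fin.ext_iff] at hc
      omega
    · show ((Sum.inl (sF,3) : Bse t), some g) ≠ _
      simp
  have hxA : x ∈ AI t ((sF:ℕ)+1) := hmemtri f hfadj
  have hyA : y ∈ AI t ((sF:ℕ)+1) := hmemtri _ _
  have hzA : z ∈ AI t ((sF:ℕ)+1) := hmemtri _ _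
  have hxy : (EG t).Adj x y := expand_adj_mates hfu'
  have hnx : ∀ p, (EG t).Adj x p → p ∈ AI t ((sF:ℕ)+1) → p = y ∨ p = z := by
    intro p hadj hpA
    rcases expand_adj_some rfl hadj with ⟨hb, w', hw', hwne, hG⟩ | ⟨hb, ho⟩
    · have hG' : (G't t).Adj (Sum.inl (sF,3)) w' := hG
      rcases (hfchar w').mp hG' with rfl | rfl | rfl
      · exact Or.inr (eq_Tv hb hw')
      · exact absurd rfl hwne
      · exact Or.inl (eq_Tv hb hw')
    · exact absurd hpA (hfout p hb)
  have hny : ∀ p, (EG t).Adj y p → p ∈ AI t ((sF:ℕ)+1) → p = x ∨ p = z := by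
    intro p hadj hpA
    rcases expand_adj_some rfl hadj with ⟨hb, w', hw', hwne, hG⟩ | ⟨hb, ho⟩
    · have hG' : (G't t).Adj (Sum.inl (sF,3)) w' := hG
      rcases (hfchar w').mp hG' with rfl | rfl | rfl
      · exact Or.inr (eq_Tv hb hw')
      · exact Or.inl (eq_Tv hb hw')
      · exact absurd rfl hwne
    · exact absurd hb hpA.2.1
  have step1 := peel_twin (G := EG t) (z := z) hxA hyA hxy hnx hny
  -- second peel
  have hzx : z ≠ x := by
    intro hc
    have h2 := congrArg (fun q => q.1.2) hc
    simp only [hzdef, hxdef, Tv] at h2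
    exact hf2 (by injection h2 with h; exact h.symm)
  have hzy : z ≠ y := by
    intro hc
    have h2 := congrArg (fun q => q.1.2) hc
    simp [hzdef, hydef, Tv] at h2
  have hzA' : z ∈ AI t ((sF:ℕ)+1) \ {x,y} := by
    refine ⟨hzA, ?_⟩
    simp only [Set.mem_insert_iff, Set.mem_singleton_iff]
    push_neg
    exact ⟨hzx, hzy⟩
  have hwA' : w ∈ AI t ((sF:ℕ)+1) \ {x,y} := by
    refine ⟨⟨by simp [hwdef, Pv], by simp [hwdef, Pv], ?_⟩, ?_⟩
    · intro s' hs'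
      constructor
      · show (Sum.inl (sF,2) : Bse t) ≠ Sum.inl (s',3)
        simp [Prod.ext_iff]
      · show ((Sum.inl (sF,2) : Bse t), (none : Option (Bse t))) ≠ (Sum.inl (s',2), none)
        simp only [ne_eq, Prod.mk.injEq, Sum.inl.injEq, and_true]
        rintro ⟨rfl, -⟩
        omega
    · simp only [Set.mem_insert_iff, Set.mem_singleton_iff]
      push_neg
      constructor <;>
        · intro hc
          have h2 := congrArg (fun q => q.1.2) hc
          simp [hwdef, hxdef, hydef, Tv, Pv] at h2
  have hadjzw : (EG t).Adj z w := expand_adj_face_none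
  have huniq : ∀ p, (EG t).Adj z p → p ∈ (AI t ((sF:ℕ)+1) \ {x,y}) → p = w := by
    intro p hadj hpA'
    obtain ⟨hpA, hpxy⟩ := hpA'
    simp only [Set.mem_insert_iff, Set.mem_singleton_iff] at hpxy
    push_neg at hpxy
    rcases expand_adj_some rfl hadj with ⟨hb, w', hw', hwne, hG⟩ | ⟨hb, ho | ho⟩
    · have hG' : (G't t).Adj (Sum.inl (sF,3)) w' := hG
      rcases (hfchar w').mp hG' with rfl | rfl | rfl
      · exact absurd rfl hwne
      · exact absurd (eq_Tv hb hw') hpxy.1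
      · exact absurd (eq_Tv hb hw') hpxy.2
    · exact eq_Pv hb ho
    · exfalso
      rcases p.2 with ⟨-, hno⟩ | ⟨hS, w0, hw0, -⟩
      · rw [hno] at ho; simp at ho
      · rw [hb] at hS
        have hS2 := ((mem_Ssub3 _).mp hS).1
        rw [mem_Sset_2] at hS2
        exact hsF0 hS2
  have step2 := peel_deg1 (G := EG t) hadjzw hzA' hwA' huniq
  have hset : (AI t ((sF:ℕ)+1) \ {x,y}) \ {z,w} = AI t (sF:ℕ) := by
    ext p
    simp only [Set.mem_diff, Set.mem_insert_iff, Set.mem_singleton_iff]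
    constructor
    · rintro ⟨⟨hA, hxy'⟩, hzw'⟩
      push_neg at hxy' hzw'
      refine ⟨hA.1, hA.2.1, ?_⟩
      intro s' hs'
      by_cases hcs : (sF:ℕ)+1 ≤ (s':ℕ)
      · exact hA.2.2 s' hcs
      · have hs'eq : s' = sF := Fin.ext (by omega)
        subst hs'eq
        constructor
        · intro hc
          rcases p.2 with ⟨hnS, -⟩ | ⟨-, w', hw', hG⟩
          · rw [hc] at hnS; exact hnS (Ssub3_3 _)
          · rw [hc] at hG
            rcases (hfchar w').mp hG with rfl | rfl | rfl
            · exact hzw'.1 (eq_Tv hc hw')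
            · exact hxy'.1 (eq_Tv hc hw')
            · exact hxy'.2 (eq_Tv hc hw')
        · intro hc
          exact hzw'.2 (Subtype.ext hc)
    · intro hA
      have hkey := hA.2.2 sF (le_refl _)
      refine ⟨⟨⟨hA.1, hA.2.1, fun s' h => hA.2.2 s' (by omega)⟩, ?_⟩, ?_⟩
      · rintro (rfl | rfl) <;> exact hkey.1 rfl
      · rintro (rfl | rfl)
        · exact hkey.1 rfl
        · exact hkey.2 rfl
  rw [step1, step2, hset]

end GAux


namespace GAux
open SimpleGraph Set
variable {t : ℕ}

lemma stageI_step (sF : Fin (t+1)) (hs1 : 1 ≤ (sF : ℕ)) :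
    (MA (EG t) (AI t ((sF : ℕ)+1))).ncard = (MA (EG t) (AI t (sF : ℕ))).ncard := by
  by_cases hst : (sF : ℕ) = t
  · have hlast : sF = Fin.last t := Fin.ext (by simpa using hst)
    apply stageI_core sF hs1 (Sum.inr false)
    · exact (G't_adj_3 sF _).mpr (Or.inr (Or.inr (Or.inl ⟨hlast, rfl⟩)))
    · intro q
      rw [G't_adj_3]
      constructor
      · rintro (rfl | ⟨s', hs', rfl⟩ | ⟨-, rfl⟩ | rfl)
        · exact Or.inl rfl
        · exact absurd s'.isLt (by omega)
        · exact Or.inr (Or.inl rfl)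
        · exact Or.inr (Or.inr rfl)
      · rintro (rfl | rfl | rfl)
        · exact Or.inl rfl
        · exact Or.inr (Or.inr (Or.inl ⟨hlast, rfl⟩))
        · exact Or.inr (Or.inr (Or.inr rfl))
    · simp
    · simp
    · intro p hb hpA
      exact hpA.1 hb
  · have hlt : (sF : ℕ) < t := lt_of_le_of_ne (by omega) hst
    have h1 : (sF : ℕ) + 1 < t + 1 := by omega
    apply stageI_core sF hs1 (Sum.inl (⟨(sF:ℕ)+1, h1⟩, 2))
    · exact (G't_adj_3 sF _).mpr (Or.inr (Or.inl ⟨⟨(sF:ℕ)+1, h1⟩, rfl, rfl⟩))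
    · intro q
      rw [G't_adj_3]
      constructor
      · rintro (rfl | ⟨s', hs', rfl⟩ | ⟨hl, rfl⟩ | rfl)
        · exact Or.inl rfl
        · refine Or.inr (Or.inl ?_)
          have : s' = ⟨(sF:ℕ)+1, h1⟩ := Fin.ext (by simpa using hs')
          rw [this]
        · exfalso
          rw [Fin.ext_iff] at hl
          simp only [Fin.val_last] at hl
          omega
        · exact Or.inr (Or.inr rfl)
      · rintro (rfl | rfl | rfl)
        · exact Or.inl rfl
        · exact Or.inr (Or.inl ⟨⟨(sF:ℕ)+1, h1⟩, rfl, rfl⟩)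
        · exact Or.inr (Or.inr (Or.inr rfl))
    · simp only [ne_eq, Sum.inl.injEq, Prod.mk.injEq]
      rintro ⟨hc, -⟩
      rw [Fin.ext_iff] at hc
      simp at hc
    · simp
    · intro p hb hpA
      rcases p.2 with ⟨-, hno⟩ | ⟨hS, w0, hw0, -⟩
      · exact (hpA.2.2 ⟨(sF:ℕ)+1, h1⟩ (le_refl _)).2 (Prod.ext hb hno)
      · rw [hb] at hS
        have hS2 := ((mem_Ssub3 _).mp hS).1
        rw [mem_Sset_2, Fin.ext_iff] at hS2
        simp at hS2

lemma stageI_all : (MA (EG t) (AI t (t+1))).ncard = (MA (EG t) (AI t 1)).ncard := by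
  suffices h : ∀ m, 1 ≤ m → m ≤ t+1 →
      (MA (EG t) (AI t m)).ncard = (MA (EG t) (AI t 1)).ncard from
    h (t+1) (by omega) (le_refl _)
  intro m
  induction m with
  | zero => intro h; omega
  | succ k ih =>
    intro h1 hle
    rcases Nat.eq_or_lt_of_le h1 with hk | hk
    · rw [← hk]
    · have hk1 : 1 ≤ k := by omega
      have hkt : k < t + 1 := by omega
      exact (stageI_step ⟨k, hkt⟩ hk1).trans (ih hk1 (by omega))

lemma stageII_core (sF : Fin (t+1)) (hs1 : 1 ≤ (sF : ℕ)) :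
    (MA (EG t) (AII t ((sF : ℕ)+1))).ncard = (MA (EG t) (AII t (sF : ℕ))).ncard := by
  have hsF0 : sF ≠ 0 := by
    intro hc; rw [hc] at hs1; simp at hs1
  set x : VT t := Tv (Sum.inl (sF,1)) (Sum.inl (sF,2)) (Ssub3_1 sF)
    ((G't_adj_1 sF _).mpr (Or.inr (Or.inl rfl))) with hxdef
  set y : VT t := Tv (Sum.inl (sF,1)) (Sum.inr true) (Ssub3_1 sF)
    ((G't_adj_1 sF _).mpr (Or.inr (Or.inr rfl))) with hydef
  set z : VT t := Tv (Sum.inl (sF,1)) (Sum.inl (sF,0)) (Ssub3_1 sF)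
    ((G't_adj_1 sF _).mpr (Or.inl rfl)) with hzdef
  set w : VT t := Pv (Sum.inl (sF,0)) (not_Ssub3_0 hsF0) with hwdef
  have hmemtri : ∀ (g : Bse t) hadj', Tv (Sum.inl (sF,1)) g (Ssub3_1 sF) hadj' ∈ AII t ((sF:ℕ)+1) := by
    intro g hadj'
    refine ⟨⟨by simp [Tv], by simp [Tv], ?_⟩, ?_⟩
    · intro s' hs'
      constructor
      · show (Sum.inl (sF,1) : Bse t) ≠ _
        simp [Prod.ext_iff]
      · show ((Sum.inl (sF,1) : Bse t), some g) ≠ _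
        simp
    · intro s' hs'
      constructor
      · show (Sum.inl (sF,1) : Bse t) ≠ _
        simp only [ne_eq, Sum.inl.injEq, Prod.mk.injEq]
        rintro ⟨hc, -⟩
        rw [Fin.ext_iff] at hc
        omega
      · show ((Sum.inl (sF,1) : Bse t), some g) ≠ _
        simp
  have hxA : x ∈ AII t ((sF:ℕ)+1) := hmemtri _ _
  have hyA : y ∈ AII t ((sF:ℕ)+1) := hmemtri _ _
  have hzA : z ∈ AII t ((sF:ℕ)+1) := hmemtri _ _
  have hxy : (EG t).Adj x y := expand_adj_mates (by simp)
  have hout2 : ∀ p : VT t, p.1.1 = Sum.inl (sF,2) → p ∉ AII t ((sF:ℕ)+1) := by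
    intro p hb hpA
    rcases p.2 with ⟨-, hno⟩ | ⟨hS, w0, hw0, -⟩
    · exact (hpA.1.2.2 sF hs1).2 (Prod.ext hb hno)
    · rw [hb] at hS
      exact hsF0 ((mem_Sset_2 sF).mp ((mem_Ssub3 _).mp hS).1)
  have hnx : ∀ p, (EG t).Adj x p → p ∈ AII t ((sF:ℕ)+1) → p = y ∨ p = z := by
    intro p hadj hpA
    rcases expand_adj_some rfl hadj with ⟨hb, w', hw', hwne, hG⟩ | ⟨hb, ho⟩
    · have hG' : (G't t).Adj (Sum.inl (sF,1)) w' := hG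
      rcases (G't_adj_1 sF w').mp hG' with rfl | rfl | rfl
      · exact Or.inr (eq_Tv hb hw')
      · exact absurd rfl hwne
      · exact Or.inl (eq_Tv hb hw')
    · exact absurd hpA (hout2 p hb)
  have hny : ∀ p, (EG t).Adj y p → p ∈ AII t ((sF:ℕ)+1) → p = x ∨ p = z := by
    intro p hadj hpA
    rcases expand_adj_some rfl hadj with ⟨hb, w', hw', hwne, hG⟩ | ⟨hb, ho⟩
    · have hG' : (G't t).Adj (Sum.inl (sF,1)) w' := hG
      rcases (G't_adj_1 sF w').mp hG' with rfl | rfl | rfl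
      · exact Or.inr (eq_Tv hb hw')
      · exact Or.inl (eq_Tv hb hw')
      · exact absurd rfl hwne
    · exact absurd hb hpA.1.2.1
  have step1 := peel_twin (G := EG t) (z := z) hxA hyA hxy hnx hny
  have hzx : z ≠ x := by
    intro hc
    have h2 := congrArg (fun q => q.1.2) hc
    simp [hzdef, hxdef, Tv, Prod.ext_iff] at h2
  have hzy : z ≠ y := by
    intro hc
    have h2 := congrArg (fun q => q.1.2) hc
    simp [hzdef, hydef, Tv] at h2
  have hzA' : z ∈ AII t ((sF:ℕ)+1) \ {x,y} := by
    refine ⟨hzA, ?_⟩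
    simp only [Set.mem_insert_iff, Set.mem_singleton_iff]
    push_neg
    exact ⟨hzx, hzy⟩
  have hwA' : w ∈ AII t ((sF:ℕ)+1) \ {x,y} := by
    refine ⟨⟨⟨by simp [hwdef, Pv], by simp [hwdef, Pv], ?_⟩, ?_⟩, ?_⟩
    · intro s' hs'
      constructor
      · show (Sum.inl (sF,0) : Bse t) ≠ Sum.inl (s',3)
        simp [Prod.ext_iff]
      · show ((Sum.inl (sF,0) : Bse t), (none : Option (Bse t))) ≠ (Sum.inl (s',2), none)
        simp [Prod.ext_iff]
    · intro s' hs'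
      constructor
      · show (Sum.inl (sF,0) : Bse t) ≠ Sum.inl (s',1)
        simp [Prod.ext_iff]
      · show ((Sum.inl (sF,0) : Bse t), (none : Option (Bse t))) ≠ (Sum.inl (s',0), none)
        simp only [ne_eq, Prod.mk.injEq, Sum.inl.injEq, and_true]
        rintro ⟨rfl, -⟩
        omega
    · simp only [Set.mem_insert_iff, Set.mem_singleton_iff]
      push_neg
      constructor <;>
        · intro hc
          have h2 := congrArg (fun q => q.1.2) hc
          simp [hwdef, hxdef, hydef, Tv, Pv] at h2
  have hadjzw : (EG t).Adj z w := expand_adj_face_none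
  have huniq : ∀ p, (EG t).Adj z p → p ∈ (AII t ((sF:ℕ)+1) \ {x,y}) → p = w := by
    intro p hadj hpA'
    obtain ⟨hpA, hpxy⟩ := hpA'
    simp only [Set.mem_insert_iff, Set.mem_singleton_iff] at hpxy
    push_neg at hpxy
    rcases expand_adj_some rfl hadj with ⟨hb, w', hw', hwne, hG⟩ | ⟨hb, ho | ho⟩
    · have hG' : (G't t).Adj (Sum.inl (sF,1)) w' := hG
      rcases (G't_adj_1 sF w').mp hG' with rfl | rfl | rfl
      · exact absurd rfl hwne
      · exact absurd (eq_Tv hb hw') hpxy.1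
      · exact absurd (eq_Tv hb hw') hpxy.2
    · exact eq_Pv hb ho
    · exfalso
      rcases p.2 with ⟨-, hno⟩ | ⟨hS, w0, hw0, -⟩
      · rw [hno] at ho; simp at ho
      · rw [hb] at hS
        exact hsF0 ((mem_Sset_0 sF).mp ((mem_Ssub3 _).mp hS).1)
  have step2 := peel_deg1 (G := EG t) hadjzw hzA' hwA' huniq
  have hset : (AII t ((sF:ℕ)+1) \ {x,y}) \ {z,w} = AII t (sF:ℕ) := by
    ext p
    simp only [Set.mem_diff, Set.mem_insert_iff, Set.mem_singleton_iff]
    constructor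
    · rintro ⟨⟨hA, hxy'⟩, hzw'⟩
      push_neg at hxy' hzw'
      refine ⟨hA.1, ?_⟩
      intro s' hs'
      by_cases hcs : (sF:ℕ)+1 ≤ (s':ℕ)
      · exact hA.2 s' hcs
      · have hs'eq : s' = sF := Fin.ext (by omega)
        subst hs'eq
        constructor
        · intro hc
          rcases p.2 with ⟨hnS, -⟩ | ⟨-, w', hw', hG⟩
          · rw [hc] at hnS; exact hnS (Ssub3_1 _)
          · rw [hc] at hG
            rcases (G't_adj_1 s' w').mp hG with rfl | rfl | rfl
            · exact hzw'.1 (eq_Tv hc hw')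
            · exact hxy'.1 (eq_Tv hc hw')
            · exact hxy'.2 (eq_Tv hc hw')
        · intro hc
          exact hzw'.2 (Subtype.ext hc)
    · intro hA
      have hkey := hA.2 sF (le_refl _)
      refine ⟨⟨⟨hA.1, fun s' h => hA.2 s' (by omega)⟩, ?_⟩, ?_⟩
      · rintro (rfl | rfl) <;> exact hkey.1 rfl
      · rintro (rfl | rfl)
        · exact hkey.1 rfl
        · exact hkey.2 rfl
  rw [step1, step2, hset]

lemma stageII_all : (MA (EG t) (AII t (t+1))).ncard = (MA (EG t) (AII t 1)).ncard := by
  suffices h : ∀ m, 1 ≤ m → m ≤ t+1 →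
      (MA (EG t) (AII t m)).ncard = (MA (EG t) (AII t 1)).ncard from
    h (t+1) (by omega) (le_refl _)
  intro m
  induction m with
  | zero => intro h; omega
  | succ k ih =>
    intro h1 hle
    rcases Nat.eq_or_lt_of_le h1 with hk | hk
    · rw [← hk]
    · have hk1 : 1 ≤ k := by omega
      have hkt : k < t + 1 := by omega
      exact (stageII_core ⟨k, hkt⟩ hk1).trans (ih hk1 (by omega))

lemma AI_one_eq : AI t 1 = AII t (t+1) := by
  ext p
  constructor
  · intro h
    exact ⟨h, fun s' hs' => absurd s'.isLt (by omega)⟩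
  · intro h
    exact h.1

end GAux


namespace GAux
open SimpleGraph Set
variable {t : ℕ}

lemma Tv_ne_of_base {v v' w w' : Bse t} {hv hv' ha ha'} (h : v ≠ v') :
    Tv v w hv ha ≠ Tv v' w' hv' ha' := by
  intro hc
  exact h (congrArg (fun q => q.1.1) hc)

lemma Tv_ne_of_face {v w w' : Bse t} {hv hv' ha ha'} (h : w ≠ w') :
    Tv v w hv ha ≠ Tv v w' hv' ha' := by
  intro hc
  have h2 := congrArg (fun q => q.1.2) hc
  simp only [Tv] at h2
  exact h (by injection h2)

lemma stageIII (ht : 1 ≤ t) : (MA (EG t) (AII t 1)).ncard = 1 := by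
  have h1t : 1 < t + 1 := by omega
  set o1 : Fin (t+1) := ⟨1, h1t⟩ with ho1def
  have ho1v : (o1 : ℕ) = 1 := rfl
  have ho1ne0 : o1 ≠ 0 := by
    intro hc
    rw [Fin.ext_iff, ho1v, Fin.val_zero] at hc
    omega
  -- characterizations at level 0
  have hchar03 : ∀ q, (G't t).Adj (Sum.inl (0,3)) q ↔
      q = Sum.inl (0,2) ∨ q = Sum.inl (o1,2) ∨ q = Sum.inr true := by
    intro q
    rw [G't_adj_3]
    constructor
    · rintro (rfl | ⟨s', hs', rfl⟩ | ⟨hl, rfl⟩ | rfl)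
      · exact Or.inl rfl
      · have : s' = o1 := Fin.ext (by rw [ho1v]; simpa using hs')
        rw [this]; exact Or.inr (Or.inl rfl)
      · exfalso; rw [Fin.ext_iff] at hl; simp at hl; omega
      · exact Or.inr (Or.inr rfl)
    · rintro (rfl | rfl | rfl)
      · exact Or.inl rfl
      · exact Or.inr (Or.inl ⟨o1, by simp [ho1v], rfl⟩)
      · exact Or.inr (Or.inr (Or.inr rfl))
  have hchar02 : ∀ q, (G't t).Adj (Sum.inl (0,2)) q ↔
      q = Sum.inl (0,1) ∨ q = Sum.inl (0,3) ∨ q = Sum.inr true := by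
    intro q
    rw [G't_adj_2]
    constructor
    · rintro (rfl | rfl | ⟨s', hs', rfl⟩ | ⟨-, rfl⟩)
      · exact Or.inl rfl
      · exact Or.inr (Or.inl rfl)
      · exfalso; simp at hs'
      · exact Or.inr (Or.inr rfl)
    · rintro (rfl | rfl | rfl)
      · exact Or.inl rfl
      · exact Or.inr (Or.inl rfl)
      · exact Or.inr (Or.inr (Or.inr ⟨rfl, rfl⟩))
  have hchar00 : ∀ q, (G't t).Adj (Sum.inl (0,0)) q ↔
      q = Sum.inl (0,1) ∨ q = Sum.inl (o1,0) ∨ q = Sum.inr true := by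
    intro q
    rw [G't_adj_0]
    constructor
    · rintro (rfl | ⟨s', hs', rfl⟩ | ⟨s', hs', rfl⟩ | ⟨hl, rfl⟩ | ⟨-, rfl⟩)
      · exact Or.inl rfl
      · have : s' = o1 := Fin.ext (by rw [ho1v]; simpa using hs')
        rw [this]; exact Or.inr (Or.inl rfl)
      · exfalso; simp at hs'
      · exfalso; rw [Fin.ext_iff] at hl; simp at hl; omega
      · exact Or.inr (Or.inr rfl)
    · rintro (rfl | rfl | rfl)
      · exact Or.inl rfl
      · exact Or.inr (Or.inl ⟨o1, by simp [ho1v], rfl⟩)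
      · exact Or.inr (Or.inr (Or.inr (Or.inr ⟨rfl, rfl⟩)))
  -- the twelve remaining vertices
  set x1 : VT t := Tv (Sum.inl (0,3)) (Sum.inl (o1,2)) (Ssub3_3 0)
    ((hchar03 _).mpr (Or.inr (Or.inl rfl))) with hx1d
  set y1 : VT t := Tv (Sum.inl (0,3)) (Sum.inr true) (Ssub3_3 0)
    ((hchar03 _).mpr (Or.inr (Or.inr rfl))) with hy1d
  set z1 : VT t := Tv (Sum.inl (0,3)) (Sum.inl (0,2)) (Ssub3_3 0)
    ((hchar03 _).mpr (Or.inl rfl)) with hz1d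
  set w2 : VT t := Tv (Sum.inl (0,2)) (Sum.inl (0,3)) Ssub3_02
    ((hchar02 _).mpr (Or.inr (Or.inl rfl))) with hw2d
  set x3 : VT t := Tv (Sum.inl (0,2)) (Sum.inr true) Ssub3_02
    ((hchar02 _).mpr (Or.inr (Or.inr rfl))) with hx3d
  set w3 : VT t := Tv (Sum.inl (0,2)) (Sum.inl (0,1)) Ssub3_02
    ((hchar02 _).mpr (Or.inl rfl)) with hw3d
  set x4 : VT t := Tv (Sum.inl (0,1)) (Sum.inl (0,2)) (Ssub3_1 0)
    ((G't_adj_1 0 _).mpr (Or.inr (Or.inl rfl))) with hx4d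
  set y4 : VT t := Tv (Sum.inl (0,1)) (Sum.inr true) (Ssub3_1 0)
    ((G't_adj_1 0 _).mpr (Or.inr (Or.inr rfl))) with hy4d
  set z4 : VT t := Tv (Sum.inl (0,1)) (Sum.inl (0,0)) (Ssub3_1 0)
    ((G't_adj_1 0 _).mpr (Or.inl rfl)) with hz4d
  set w5 : VT t := Tv (Sum.inl (0,0)) (Sum.inl (0,1)) Ssub3_00
    ((hchar00 _).mpr (Or.inl rfl)) with hw5d
  set x6 : VT t := Tv (Sum.inl (0,0)) (Sum.inl (o1,0)) Ssub3_00
    ((hchar00 _).mpr (Or.inr (Or.inl rfl))) with hx6d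
  set w6 : VT t := Tv (Sum.inl (0,0)) (Sum.inr true) Ssub3_00
    ((hchar00 _).mpr (Or.inr (Or.inr rfl))) with hw6d
  -- membership of level-0 triangle vertices
  have hmem0 : ∀ (j : Fin 4) (g : Bse t) hv hadj',
      Tv (Sum.inl ((0 : Fin (t+1)), j)) g hv hadj' ∈ AII t 1 := by
    intro j g hv hadj'
    refine ⟨⟨by simp [Tv], by simp [Tv], ?_⟩, ?_⟩ <;>
    · intro s' hs'
      constructor
      · show (Sum.inl (0,j) : Bse t) ≠ _
        simp only [ne_eq, Sum.inl.injEq, Prod.mk.injEq]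
        rintro ⟨hc, -⟩
        rw [Fin.ext_iff, Fin.val_zero] at hc
        omega
      · show ((Sum.inl (0,j) : Bse t), some g) ≠ _
        simp
  -- outside exclusions
  have hout12 : ∀ p : VT t, p.1.1 = Sum.inl (o1,2) → p ∉ AII t 1 := by
    intro p hb hpA
    rcases p.2 with ⟨-, hno⟩ | ⟨hS, w0, hw0, -⟩
    · exact (hpA.1.2.2 o1 (le_of_eq ho1v.symm)).2 (Prod.ext hb hno)
    · rw [hb] at hS
      have := (mem_Sset_2 o1).mp ((mem_Ssub3 _).mp hS).1
      exact ho1ne0 this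
  have hout10 : ∀ p : VT t, p.1.1 = Sum.inl (o1,0) → p ∉ AII t 1 := by
    intro p hb hpA
    rcases p.2 with ⟨-, hno⟩ | ⟨hS, w0, hw0, -⟩
    · exact (hpA.2 o1 (le_of_eq ho1v.symm)).2 (Prod.ext hb hno)
    · rw [hb] at hS
      have := (mem_Sset_0 o1).mp ((mem_Ssub3 _).mp hS).1
      exact ho1ne0 this
  have hnone : ∀ (p : VT t) (v : Bse t), p.1.1 = v → v ∈ Ssub t 3 → p.1.2 ≠ none := by
    intro p v hb hmem hno
    rcases p.2 with ⟨hnS, -⟩ | ⟨-, w0, hw0, -⟩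
    · rw [hb] at hnS; exact hnS hmem
    · rw [hw0] at hno; simp at hno
  -- PEEL 1 : twin (x1, y1) with common z1
  have hx1A : x1 ∈ AII t 1 := hmem0 _ _ _ _
  have hy1A : y1 ∈ AII t 1 := hmem0 _ _ _ _
  have hxy1 : (EG t).Adj x1 y1 := expand_adj_mates (by simp)
  have hnx1 : ∀ p, (EG t).Adj x1 p → p ∈ AII t 1 → p = y1 ∨ p = z1 := by
    intro p hadj hpA
    rcases expand_adj_some rfl hadj with ⟨hb, w', hw', hwne, hG⟩ | ⟨hb, ho⟩
    · have hG' : (G't t).Adj (Sum.inl (0,3)) w' := hG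
      rcases (hchar03 w').mp hG' with rfl | rfl | rfl
      · exact Or.inr (eq_Tv hb hw')
      · exact absurd rfl hwne
      · exact Or.inl (eq_Tv hb hw')
    · exact absurd hpA (hout12 p hb)
  have hny1 : ∀ p, (EG t).Adj y1 p → p ∈ AII t 1 → p = x1 ∨ p = z1 := by
    intro p hadj hpA
    rcases expand_adj_some rfl hadj with ⟨hb, w', hw', hwne, hG⟩ | ⟨hb, ho⟩
    · have hG' : (G't t).Adj (Sum.inl (0,3)) w' := hG
      rcases (hchar03 w').mp hG' with rfl | rfl | rfl
      · exact Or.inr (eq_Tv hb hw')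
      · exact Or.inl (eq_Tv hb hw')
      · exact absurd rfl hwne
    · exact absurd hb hpA.1.2.1
  have e1 := peel_twin (G := EG t) (z := z1) hx1A hy1A hxy1 hnx1 hny1
  -- PEEL 2 : deg1 (z1, w2)
  have hz1R : z1 ∈ AII t 1 \ {x1, y1} := by
    refine ⟨hmem0 _ _ _ _, ?_⟩
    simp only [Set.mem_insert_iff, Set.mem_singleton_iff]
    push_neg
    exact ⟨Tv_ne_of_face (by simp [Prod.ext_iff, Fin.ext_iff, ho1v]),
      Tv_ne_of_face (by simp)⟩
  have hw2R : w2 ∈ AII t 1 \ {x1, y1} := by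
    refine ⟨hmem0 _ _ _ _, ?_⟩
    simp only [Set.mem_insert_iff, Set.mem_singleton_iff]
    push_neg
    exact ⟨Tv_ne_of_base (by simp [Prod.ext_iff]), Tv_ne_of_base (by simp [Prod.ext_iff])⟩
  have hadj2 : (EG t).Adj z1 w2 := expand_adj_face_some (by simp [Prod.ext_iff])
  have huniq2 : ∀ p, (EG t).Adj z1 p → p ∈ AII t 1 \ {x1, y1} → p = w2 := by
    intro p hadj hpR
    obtain ⟨hpA, hpn⟩ := hpR
    simp only [Set.mem_insert_iff, Set.mem_singleton_iff] at hpn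
    push_neg at hpn
    rcases expand_adj_some rfl hadj with ⟨hb, w', hw', hwne, hG⟩ | ⟨hb, ho | ho⟩
    · have hG' : (G't t).Adj (Sum.inl (0,3)) w' := hG
      rcases (hchar03 w').mp hG' with rfl | rfl | rfl
      · exact absurd rfl hwne
      · exact absurd (eq_Tv hb hw') hpn.1
      · exact absurd (eq_Tv hb hw') hpn.2
    · exact absurd ho (hnone p _ hb Ssub3_02)
    · exact eq_Tv hb ho
  have e2 := peel_deg1 (G := EG t) hadj2 hz1R hw2R huniq2
  -- PEEL 3 : deg1 (x3, w3)
  have hx3R : x3 ∈ (AII t 1 \ {x1, y1}) \ {z1, w2} := by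
    refine ⟨⟨hmem0 _ _ _ _, ?_⟩, ?_⟩ <;>
      simp only [Set.mem_insert_iff, Set.mem_singleton_iff] <;> push_neg
    · exact ⟨Tv_ne_of_base (by simp [Prod.ext_iff]), Tv_ne_of_base (by simp [Prod.ext_iff])⟩
    · exact ⟨Tv_ne_of_base (by simp [Prod.ext_iff]), Tv_ne_of_face (by simp)⟩
  have hw3R : w3 ∈ (AII t 1 \ {x1, y1}) \ {z1, w2} := by
    refine ⟨⟨hmem0 _ _ _ _, ?_⟩, ?_⟩ <;>
      simp only [Set.mem_insert_iff, Set.mem_singleton_iff] <;> push_neg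
    · exact ⟨Tv_ne_of_base (by simp [Prod.ext_iff]), Tv_ne_of_base (by simp [Prod.ext_iff])⟩
    · exact ⟨Tv_ne_of_base (by simp [Prod.ext_iff]), Tv_ne_of_face (by simp [Prod.ext_iff])⟩
  have hadj3 : (EG t).Adj x3 w3 := expand_adj_mates (by simp)
  have huniq3 : ∀ p, (EG t).Adj x3 p → p ∈ (AII t 1 \ {x1, y1}) \ {z1, w2} → p = w3 := by
    intro p hadj hpR
    obtain ⟨⟨hpA, -⟩, hpn⟩ := hpR
    simp only [Set.mem_insert_iff, Set.mem_singleton_iff] at hpn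
    push_neg at hpn
    rcases expand_adj_some rfl hadj with ⟨hb, w', hw', hwne, hG⟩ | ⟨hb, ho⟩
    · have hG' : (G't t).Adj (Sum.inl (0,2)) w' := hG
      rcases (hchar02 w').mp hG' with rfl | rfl | rfl
      · exact eq_Tv hb hw'
      · exact absurd (eq_Tv hb hw') hpn.2
      · exact absurd rfl hwne
    · exact absurd hb hpA.1.2.1
  have e3 := peel_deg1 (G := EG t) hadj3 hx3R hw3R huniq3
  -- PEEL 4 : twin (x4, y4) with common z4
  have hx4R : x4 ∈ ((AII t 1 \ {x1, y1}) \ {z1, w2}) \ {x3, w3} := by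
    refine ⟨⟨⟨hmem0 _ _ _ _, ?_⟩, ?_⟩, ?_⟩ <;>
      simp only [Set.mem_insert_iff, Set.mem_singleton_iff] <;> push_neg <;>
      exact ⟨Tv_ne_of_base (by simp [Prod.ext_iff]), Tv_ne_of_base (by simp [Prod.ext_iff])⟩
  have hy4R : y4 ∈ ((AII t 1 \ {x1, y1}) \ {z1, w2}) \ {x3, w3} := by
    refine ⟨⟨⟨hmem0 _ _ _ _, ?_⟩, ?_⟩, ?_⟩ <;>
      simp only [Set.mem_insert_iff, Set.mem_singleton_iff] <;> push_neg <;>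
      exact ⟨Tv_ne_of_base (by simp [Prod.ext_iff]), Tv_ne_of_base (by simp [Prod.ext_iff])⟩
  have hxy4 : (EG t).Adj x4 y4 := expand_adj_mates (by simp)
  have hnx4 : ∀ p, (EG t).Adj x4 p →
      p ∈ ((AII t 1 \ {x1, y1}) \ {z1, w2}) \ {x3, w3} → p = y4 ∨ p = z4 := by
    intro p hadj hpR
    obtain ⟨⟨⟨hpA, -⟩, -⟩, hpn⟩ := hpR
    simp only [Set.mem_insert_iff, Set.mem_singleton_iff] at hpn
    push_neg at hpn
    rcases expand_adj_some rfl hadj with ⟨hb, w', hw', hwne, hG⟩ | ⟨hb, ho | ho⟩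
    · have hG' : (G't t).Adj (Sum.inl (0,1)) w' := hG
      rcases (G't_adj_1 0 w').mp hG' with rfl | rfl | rfl
      · exact Or.inr (eq_Tv hb hw')
      · exact absurd rfl hwne
      · exact Or.inl (eq_Tv hb hw')
    · exact absurd ho (hnone p _ hb Ssub3_02)
    · exact absurd (eq_Tv hb ho) hpn.2
  have hny4 : ∀ p, (EG t).Adj y4 p →
      p ∈ ((AII t 1 \ {x1, y1}) \ {z1, w2}) \ {x3, w3} → p = x4 ∨ p = z4 := by
    intro p hadj hpR
    obtain ⟨⟨⟨hpA, -⟩, -⟩, -⟩ := hpR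
    rcases expand_adj_some rfl hadj with ⟨hb, w', hw', hwne, hG⟩ | ⟨hb, ho⟩
    · have hG' : (G't t).Adj (Sum.inl (0,1)) w' := hG
      rcases (G't_adj_1 0 w').mp hG' with rfl | rfl | rfl
      · exact Or.inr (eq_Tv hb hw')
      · exact Or.inl (eq_Tv hb hw')
      · exact absurd rfl hwne
    · exact absurd hb hpA.1.2.1
  have e4 := peel_twin (G := EG t) (z := z4) hx4R hy4R hxy4 hnx4 hny4
  -- PEEL 5 : deg1 (z4, w5)
  have hz4R : z4 ∈ (((AII t 1 \ {x1, y1}) \ {z1, w2}) \ {x3, w3}) \ {x4, y4} := by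
    refine ⟨⟨⟨⟨hmem0 _ _ _ _, ?_⟩, ?_⟩, ?_⟩, ?_⟩ <;>
      simp only [Set.mem_insert_iff, Set.mem_singleton_iff] <;> push_neg
    · exact ⟨Tv_ne_of_base (by simp [Prod.ext_iff]), Tv_ne_of_base (by simp [Prod.ext_iff])⟩
    · exact ⟨Tv_ne_of_base (by simp [Prod.ext_iff]), Tv_ne_of_base (by simp [Prod.ext_iff])⟩
    · exact ⟨Tv_ne_of_base (by simp [Prod.ext_iff]), Tv_ne_of_base (by simp [Prod.ext_iff])⟩
    · exact ⟨Tv_ne_of_face (by simp [Prod.ext_iff]), Tv_ne_of_face (by simp)⟩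
  have hw5R : w5 ∈ (((AII t 1 \ {x1, y1}) \ {z1, w2}) \ {x3, w3}) \ {x4, y4} := by
    refine ⟨⟨⟨⟨hmem0 _ _ _ _, ?_⟩, ?_⟩, ?_⟩, ?_⟩ <;>
      simp only [Set.mem_insert_iff, Set.mem_singleton_iff] <;> push_neg <;>
      exact ⟨Tv_ne_of_base (by simp [Prod.ext_iff]), Tv_ne_of_base (by simp [Prod.ext_iff])⟩
  have hadj5 : (EG t).Adj z4 w5 := expand_adj_face_some (by simp [Prod.ext_iff])
  have huniq5 : ∀ p, (EG t).Adj z4 p →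
      p ∈ (((AII t 1 \ {x1, y1}) \ {z1, w2}) \ {x3, w3}) \ {x4, y4} → p = w5 := by
    intro p hadj hpR
    obtain ⟨⟨⟨⟨hpA, -⟩, -⟩, -⟩, hpn⟩ := hpR
    simp only [Set.mem_insert_iff, Set.mem_singleton_iff] at hpn
    push_neg at hpn
    rcases expand_adj_some rfl hadj with ⟨hb, w', hw', hwne, hG⟩ | ⟨hb, ho | ho⟩
    · have hG' : (G't t).Adj (Sum.inl (0,1)) w' := hG
      rcases (G't_adj_1 0 w').mp hG' with rfl | rfl | rfl
      · exact absurd rfl hwne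
      · exact absurd (eq_Tv hb hw') hpn.1
      · exact absurd (eq_Tv hb hw') hpn.2
    · exact absurd ho (hnone p _ hb Ssub3_00)
    · exact eq_Tv hb ho
  have e5 := peel_deg1 (G := EG t) hadj5 hz4R hw5R huniq5
  -- PEEL 6 : deg1 (x6, w6)
  have hx6R : x6 ∈ ((((AII t 1 \ {x1, y1}) \ {z1, w2}) \ {x3, w3}) \ {x4, y4}) \ {z4, w5} := by
    refine ⟨⟨⟨⟨⟨hmem0 _ _ _ _, ?_⟩, ?_⟩, ?_⟩, ?_⟩, ?_⟩ <;>
      simp only [Set.mem_insert_iff, Set.mem_singleton_iff] <;> push_neg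
    · exact ⟨Tv_ne_of_base (by simp [Prod.ext_iff]), Tv_ne_of_base (by simp [Prod.ext_iff])⟩
    · exact ⟨Tv_ne_of_base (by simp [Prod.ext_iff]), Tv_ne_of_base (by simp [Prod.ext_iff])⟩
    · exact ⟨Tv_ne_of_base (by simp [Prod.ext_iff]), Tv_ne_of_base (by simp [Prod.ext_iff])⟩
    · exact ⟨Tv_ne_of_base (by simp [Prod.ext_iff]), Tv_ne_of_base (by simp [Prod.ext_iff])⟩
    · exact ⟨Tv_ne_of_base (by simp [Prod.ext_iff]),
        Tv_ne_of_face (by simp [Prod.ext_iff, Fin.ext_iff, ho1v])⟩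
  have hw6R : w6 ∈ ((((AII t 1 \ {x1, y1}) \ {z1, w2}) \ {x3, w3}) \ {x4, y4}) \ {z4, w5} := by
    refine ⟨⟨⟨⟨⟨hmem0 _ _ _ _, ?_⟩, ?_⟩, ?_⟩, ?_⟩, ?_⟩ <;>
      simp only [Set.mem_insert_iff, Set.mem_singleton_iff] <;> push_neg
    · exact ⟨Tv_ne_of_base (by simp [Prod.ext_iff]), Tv_ne_of_base (by simp [Prod.ext_iff])⟩
    · exact ⟨Tv_ne_of_base (by simp [Prod.ext_iff]), Tv_ne_of_base (by simp [Prod.ext_iff])⟩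
    · exact ⟨Tv_ne_of_base (by simp [Prod.ext_iff]), Tv_ne_of_base (by simp [Prod.ext_iff])⟩
    · exact ⟨Tv_ne_of_base (by simp [Prod.ext_iff]), Tv_ne_of_base (by simp [Prod.ext_iff])⟩
    · exact ⟨Tv_ne_of_base (by simp [Prod.ext_iff]), Tv_ne_of_face (by simp)⟩
  have hadj6 : (EG t).Adj x6 w6 := expand_adj_mates (by simp)
  have huniq6 : ∀ p, (EG t).Adj x6 p →
      p ∈ ((((AII t 1 \ {x1, y1}) \ {z1, w2}) \ {x3, w3}) \ {x4, y4}) \ {z4, w5} → p = w6 := by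
    intro p hadj hpR
    obtain ⟨⟨⟨⟨⟨hpA, -⟩, -⟩, -⟩, -⟩, hpn⟩ := hpR
    simp only [Set.mem_insert_iff, Set.mem_singleton_iff] at hpn
    push_neg at hpn
    rcases expand_adj_some rfl hadj with ⟨hb, w', hw', hwne, hG⟩ | ⟨hb, ho⟩
    · have hG' : (G't t).Adj (Sum.inl (0,0)) w' := hG
      rcases (hchar00 w').mp hG' with rfl | rfl | rfl
      · exact absurd (eq_Tv hb hw') hpn.2
      · exact absurd rfl hwne
      · exact eq_Tv hb hw'
    · exact absurd hpA (hout10 p hb)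
  have e6 := peel_deg1 (G := EG t) hadj6 hx6R hw6R huniq6
  -- classification of AII t 1
  have hclass : ∀ p : VT t, p ∈ AII t 1 →
      p = x1 ∨ p = y1 ∨ p = z1 ∨ p = w2 ∨ p = x3 ∨ p = w3 ∨
      p = x4 ∨ p = y4 ∨ p = z4 ∨ p = w5 ∨ p = x6 ∨ p = w6 := by
    intro p hp
    obtain ⟨⟨hb1, hb2, hI⟩, hII⟩ := hp
    rcases hq : p.1.1 with pl | b
    · obtain ⟨s', j⟩ := pl
      rcases p.2 with ⟨hnS, hno⟩ | ⟨hS, w', hw', hG⟩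
      · exfalso
        by_cases hs' : 1 ≤ (s' : ℕ)
        · fin_cases j
          · exact (hII s' hs').2 (Prod.ext hq hno)
          · exact (hII s' hs').1 hq
          · exact (hI s' hs').2 (Prod.ext hq hno)
          · exact (hI s' hs').1 hq
        · have hs0 : s' = 0 := Fin.ext (by rw [Fin.val_zero]; omega)
          subst hs0
          rw [hq] at hnS
          fin_cases j
          · exact hnS Ssub3_00
          · exact hnS (Ssub3_1 0)
          · exact hnS Ssub3_02
          · exact hnS (Ssub3_3 0)
      · by_cases hs' : 1 ≤ (s' : ℕ)
        · exfalso
          fin_cases j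
          · rw [hq] at hS
            have := (mem_Sset_0 s').mp ((mem_Ssub3 _).mp hS).1
            rw [Fin.ext_iff, Fin.val_zero] at this
            omega
          · exact (hII s' hs').1 hq
          · rw [hq] at hS
            have := (mem_Sset_2 s').mp ((mem_Ssub3 _).mp hS).1
            rw [Fin.ext_iff, Fin.val_zero] at this
            omega
          · exact (hI s' hs').1 hq
        · have hs0 : s' = 0 := Fin.ext (by rw [Fin.val_zero]; omega)
          subst hs0
          rw [hq] at hG
          fin_cases j
          · rcases (hchar00 w').mp hG with rfl | rfl | rfl
            · exact Or.inr (Or.inr (Or.inr (Or.inr (Or.inr (Or.inr (Or.inr (Or.inr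
                (Or.inr (Or.inl (eq_Tv hq hw'))))))))))
            · exact Or.inr (Or.inr (Or.inr (Or.inr (Or.inr (Or.inr (Or.inr (Or.inr
                (Or.inr (Or.inr (Or.inl (eq_Tv hq hw')))))))))))
            · exact Or.inr (Or.inr (Or.inr (Or.inr (Or.inr (Or.inr (Or.inr (Or.inr
                (Or.inr (Or.inr (Or.inr (eq_Tv hq hw')))))))))))
          · rcases (G't_adj_1 0 w').mp hG with rfl | rfl | rfl
            · exact Or.inr (Or.inr (Or.inr (Or.inr (Or.inr (Or.inr (Or.inr (Or.inr
                (Or.inl (eq_Tv hq hw')))))))))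
            · exact Or.inr (Or.inr (Or.inr (Or.inr (Or.inr (Or.inr (Or.inl (eq_Tv hq hw')))))))
            · exact Or.inr (Or.inr (Or.inr (Or.inr (Or.inr (Or.inr (Or.inr (Or.inl
                (eq_Tv hq hw'))))))))
          · rcases (hchar02 w').mp hG with rfl | rfl | rfl
            · exact Or.inr (Or.inr (Or.inr (Or.inr (Or.inr (Or.inl (eq_Tv hq hw'))))))
            · exact Or.inr (Or.inr (Or.inr (Or.inl (eq_Tv hq hw'))))
            · exact Or.inr (Or.inr (Or.inr (Or.inr (Or.inl (eq_Tv hq hw')))))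
          · rcases (hchar03 w').mp hG with rfl | rfl | rfl
            · exact Or.inr (Or.inr (Or.inl (eq_Tv hq hw')))
            · exact Or.inl (eq_Tv hq hw')
            · exact Or.inr (Or.inl (eq_Tv hq hw'))
    · cases b
      · exact absurd hq hb1
      · exact absurd hq hb2
  have hempty : ((((((AII t 1 \ {x1, y1}) \ {z1, w2}) \ {x3, w3}) \ {x4, y4}) \ {z4, w5})
      \ {x6, w6}) = (∅ : Set (VT t)) := by
    ext p
    simp only [Set.mem_empty_iff_false, iff_false]
    rintro ⟨⟨⟨⟨⟨⟨hp0, h1⟩, h2⟩, h3⟩, h4⟩, h5⟩, h6⟩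
    rcases hclass p hp0 with rfl | rfl | rfl | rfl | rfl | rfl | rfl | rfl | rfl | rfl | rfl | rfl
    · exact h1 (by simp)
    · exact h1 (by simp)
    · exact h2 (by simp)
    · exact h2 (by simp)
    · exact h3 (by simp)
    · exact h3 (by simp)
    · exact h4 (by simp)
    · exact h4 (by simp)
    · exact h5 (by simp)
    · exact h5 (by simp)
    · exact h6 (by simp)
    · exact h6 (by simp)
  rw [e1, e2, e3, e4, e5, e6, hempty, MA_empty_ncard]

lemma count_one (ht : 1 ≤ t) :
    (MA (EG t) {z : VT t | z ≠ uVert t ∧ z ≠ u'Vert3 t}).ncard = 1 := by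
  have hA0 : {z : VT t | z ≠ uVert t ∧ z ≠ u'Vert3 t} = AI t (t+1) := by
    ext p
    simp only [Set.mem_setOf_eq]
    constructor
    · rintro ⟨h1, h2⟩
      refine ⟨?_, ?_, fun s' hs' => absurd s'.isLt (by omega)⟩
      · intro hc
        rcases p.2 with ⟨-, hno⟩ | ⟨hS, w0, hw0, -⟩
        · exact h1 (Subtype.ext (Prod.ext hc hno))
        · rw [hc] at hS
          exact ((mem_Ssub3 _).mp hS).2 rfl
      · intro hc
        rcases p.2 with ⟨-, hno⟩ | ⟨hS, w0, hw0, -⟩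
        · exact h2 (Subtype.ext (Prod.ext hc hno))
        · rw [hc] at hS
          exact not_mem_Sset_u' ((mem_Ssub3 _).mp hS).1
    · rintro ⟨h1, h2, -⟩
      constructor
      · intro hc; rw [hc] at h1; exact h1 rfl
      · intro hc; rw [hc] at h2; exact h2 rfl
  rw [hA0, stageI_all, AI_one_eq, stageII_all, stageIII ht]

end GAux

/-- For every even `n ≥ 18` with `n ≡ 6 (mod 8)`, i.e. `n = 6 + 8(t+1)`
with `t ≥ 1`, the edge `u u'` is a solitary edge of `G''_n = G'_t⟨S₃⟩`; that is, it
lies in exactly one perfect matching.  Equivalently, `G''_n − {u, u'}` has exactly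
one perfect matching. -/
theorem stmt7 (n t : ℕ) (ht : 1 ≤ t) (heq : n = 6 + 8 * (t + 1)) :
    Set.ncard {M : (expand (G't t) (Ssub t 3)).Subgraph |
        M.IsPerfectMatching ∧ M.Adj (uVert t) (u'Vert3 t)} = 1 ∧
      numPM ((expand (G't t) (Ssub t 3)).induce
        {z | z ≠ uVert t ∧ z ≠ u'Vert3 t}) = 1 := by
  constructor
  · have hadj : (expand (G't t) (Ssub t 3)).Adj (uVert t) (u'Vert3 t) :=
      GAux.expand_adj_none_none GAux.G't_adj_uu'
    rw [pm_with_edge hadj]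
    have hset : (Set.univ \ {uVert t, u'Vert3 t} : Set (ExpandVerts (G't t) (Ssub t 3))) =
        {z | z ≠ uVert t ∧ z ≠ u'Vert3 t} := by
      ext p
      simp only [Set.mem_diff, Set.mem_univ, true_and, Set.mem_insert_iff,
        Set.mem_singleton_iff, not_or, Set.mem_setOf_eq]
    rw [hset]
    exact GAux.count_one ht
  · rw [numPM_induce]
    exact GAux.count_one ht
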